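/- Fix 0 < δ < 1/2, 0 < Λ, Q = 2n+2, and set α := (Q−2)/4 + δ. There exists a constant γ > 0 depending only on Q, Λ, δ such that: for every 2n×2n symmetric positive definite matrix M with M⁻¹ ≤ (1/λ)I and M ≤ Λ I (λ ≤ 1 ≤ Λ), every bounded open set O ⊂ ℝ^{2n+1}, and every z ∈ ℝ^{2n+1}, the function h(z) := ∫_O g(z⁻¹∘ζ) dζ with g(ζ) = −(1/α)φ_M(ζ)^{−α} satisfies 0 ≥ h(z) ≥ −γ·|O|^{1 − 4α/Q}, where |O| is the Lebesgue measure of O. -/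

import Mathlib

open MeasureTheory Set Matrix

noncomputable section

/-- Points of the Heisenberg group `ℍⁿ = ℝ^{2n} × ℝ`, written `z = (x, t)`. -/
abbrev Hpt (n : ℕ) := (Fin (2 * n) → ℝ) × ℝ

/-- The standard symplectic matrix `J = (0, -Iₙ; Iₙ, 0)`. -/
def Jmat (n : ℕ) : Matrix (Fin (2 * n)) (Fin (2 * n)) ℝ :=
  Matrix.of fun i j =>
    if (i : ℕ) + n = (j : ℕ) then (-1 : ℝ) else if (j : ℕ) + n = (i : ℕ) then 1 else 0

/-- The Heisenberg group law `(x,t) ∘ (ξ,τ) = (x + ξ, t + τ + 2⟨Jx, ξ⟩)`. -/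
def hmul {n : ℕ} (z w : Hpt n) : Hpt n :=
  (z.1 + w.1, z.2 + w.2 + 2 * ((Jmat n).mulVec z.1 ⬝ᵥ w.1))

/-- The direction vector of the horizontal vector field `Xᵢ = ∂_{xᵢ} + 2(Jx)ᵢ ∂_t`
at a point with horizontal coordinates `x`. -/
def Xvec {n : ℕ} (x : Fin (2 * n) → ℝ) (i : Fin (2 * n)) : Hpt n :=
  (Pi.single i 1, 2 * (Jmat n).mulVec x i)

/-- The horizontal derivative `Xᵢ ψ`. -/
def Xd {n : ℕ} (i : Fin (2 * n)) (ψ : Hpt n → ℝ) (z : Hpt n) : ℝ :=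
  fderiv ℝ ψ z (Xvec z.1 i)

/-- The horizontal gradient `∇_H ψ = (X₁ψ, …, X_{2n}ψ)`. -/
def gradH {n : ℕ} (ψ : Hpt n → ℝ) (z : Hpt n) : Fin (2 * n) → ℝ := fun i => Xd i ψ z

/-- The operator `𝓛_A ψ = Σ_{i,j} a_{ij}(z) XᵢXⱼψ` for a (variable) coefficient matrix `A`. -/
def Lop {n : ℕ} (A : Hpt n → Matrix (Fin (2 * n)) (Fin (2 * n)) ℝ) (ψ : Hpt n → ℝ)
    (z : Hpt n) : ℝ :=
  ∑ i, ∑ j, A z i j * Xd i (Xd j ψ) z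

/-- `φ_M(x,t) = ⟨M⁻¹x, x⟩² + t²`. -/
def phiM {n : ℕ} (M : Matrix (Fin (2 * n)) (Fin (2 * n)) ℝ) (z : Hpt n) : ℝ :=
  (M⁻¹.mulVec z.1 ⬝ᵥ z.1) ^ 2 + z.2 ^ 2

/-- A matrix `M` is symplectic if `M⁻¹ = Jᵗ M J`. -/
def IsSymplecticMat {n : ℕ} (M : Matrix (Fin (2 * n)) (Fin (2 * n)) ℝ) : Prop :=
  M⁻¹ = (Jmat n)ᵀ * M * Jmat n


/-- Inverse in the Heisenberg group: `(x,t)⁻¹ = (-x,-t)`. -/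
def hinv {n : ℕ} (z : Hpt n) : Hpt n := (-z.1, -z.2)

/-- The homogeneous symmetric norm `ρ(x,t) = (|x|⁴ + t²)^{1/4}`. -/
def rho {n : ℕ} (z : Hpt n) : ℝ := ((∑ i, z.1 i ^ 2) ^ 2 + z.2 ^ 2) ^ ((4 : ℝ)⁻¹)

/-- The left-invariant (quasi-)distance `d(z,ζ) = ρ(ζ⁻¹ ∘ z)`. -/
def hdist {n : ℕ} (z w : Hpt n) : ℝ := rho (hmul (hinv w) z)

/-- The Koranyi ball `B_R(z)`. -/
def kball {n : ℕ} (z : Hpt n) (R : ℝ) : Set (Hpt n) := {w | hdist z w < R}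

/-- The modified homogeneous norm `ρ_M = φ_M^{1/4}`. -/
def rhoM {n : ℕ} (M : Matrix (Fin (2 * n)) (Fin (2 * n)) ℝ) (z : Hpt n) : ℝ :=
  phiM M z ^ ((4 : ℝ)⁻¹)

/-- The modified (quasi-)distance `d_M(z,ζ) = ρ_M(ζ⁻¹ ∘ z)`. -/
def dM {n : ℕ} (M : Matrix (Fin (2 * n)) (Fin (2 * n)) ℝ) (z w : Hpt n) : ℝ :=
  rhoM M (hmul (hinv w) z)

/-- The ball `B^M_r(z)` for the modified distance `d_M`. -/
def kballM {n : ℕ} (M : Matrix (Fin (2 * n)) (Fin (2 * n)) ℝ) (z : Hpt n) (r : ℝ) :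
    Set (Hpt n) := {w | dM M z w < r}

/-- Loewner order on symmetric matrices: `P ≤ Q` iff `Q - P` is positive semidefinite. -/
def matLE {m : ℕ} (P Q : Matrix (Fin m) (Fin m) ℝ) : Prop := (Q - P).PosSemidef

/-- The symmetrized horizontal Hessian `D²_H ψ = (X_{i,j} ψ)_{ij}`,
`X_{i,j}ψ = ½(XᵢXⱼψ + XⱼXᵢψ)`. -/
def D2H {n : ℕ} (ψ : Hpt n → ℝ) (z : Hpt n) : Matrix (Fin (2 * n)) (Fin (2 * n)) ℝ :=
  Matrix.of fun i j => (Xd i (Xd j ψ) z + Xd j (Xd i ψ) z) / 2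

/-- The operator norm of a matrix, i.e. the norm of the induced operator on
Euclidean space. -/
def matNorm {m : ℕ} (M : Matrix (Fin m) (Fin m) ℝ) : ℝ :=
  ‖Matrix.toEuclideanCLM (𝕜 := ℝ) M‖

/-- The class `M_n(λ,Λ,Ω)`: symmetric matrix-valued functions of unit determinant with
`λ I ≤ A(z) ≤ Λ I` on `Ω`. -/
def MClass {n : ℕ} (lam Lam : ℝ) (Ω : Set (Hpt n))
    (A : Hpt n → Matrix (Fin (2 * n)) (Fin (2 * n)) ℝ) : Prop :=
  ∀ z ∈ Ω, (A z).IsSymm ∧ (A z).det = 1 ∧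
    matLE (lam • (1 : Matrix (Fin (2 * n)) (Fin (2 * n)) ℝ)) (A z) ∧
    matLE (A z) (Lam • (1 : Matrix (Fin (2 * n)) (Fin (2 * n)) ℝ))

/-- The class `C(Ω,ω)`: continuous matrix-valued functions whose modulus of continuity
`ω_A(z₀;ε) = sup_{z ∈ B_ε(z₀) ∩ Ω} ‖A(z) - A(z₀)‖` is bounded by `ω(ε)` for all
`z₀ ∈ Ω` and `0 < ε < 1`. -/
def CClass {n : ℕ} (ω : ℝ → ℝ) (Ω : Set (Hpt n))
    (A : Hpt n → Matrix (Fin (2 * n)) (Fin (2 * n)) ℝ) : Prop :=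
  ContinuousOn A Ω ∧
    ∀ z₀ ∈ Ω, ∀ ε : ℝ, 0 < ε → ε < 1 → ∀ z ∈ kball z₀ ε ∩ Ω, matNorm (A z - A z₀) ≤ ω ε

/-- `A` is symplectic on `Ω`: `A(z)⁻¹ = Jᵗ A(z) J` for all `z ∈ Ω`. -/
def SymplecticOn {n : ℕ} (Ω : Set (Hpt n))
    (A : Hpt n → Matrix (Fin (2 * n)) (Fin (2 * n)) ℝ) : Prop :=
  ∀ z ∈ Ω, IsSymplecticMat (A z)

/-- A modulus `ω : [0,1) → [0,1)`, non-decreasing, with `ω(0) = 0` and `ω(0⁺) = 0`. -/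
def IsModulus (ω : ℝ → ℝ) : Prop :=
  MonotoneOn ω (Set.Ico (0 : ℝ) 1) ∧ (∀ s ∈ Set.Ico (0 : ℝ) 1, 0 ≤ ω s ∧ ω s < 1) ∧
    ω 0 = 0 ∧ Filter.Tendsto ω (nhdsWithin 0 (Set.Ioi 0)) (nhds 0)

/-- The barrier kernel `g(ζ) = -(1/α)·φ_M(ζ)^{-α}`. -/
def gfun {n : ℕ} (M : Matrix (Fin (2 * n)) (Fin (2 * n)) ℝ) (α : ℝ) (ζ : Hpt n) : ℝ :=
  -(1 / α) * phiM M ζ ^ (-α : ℝ)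

/-- The conclusion of the subsolution lemma (Lemma 3.6): for all open `Ω`, all symplectic
`A ∈ M_n(λ,Λ,Ω) ∩ C(Ω,ω)` and `z₀ ∈ Ω`, with `M = A(z₀)`, `α = (Q-2)/4 + δ` and
`g = -(1/α)·φ_M^{-α}`, one has `-tr(A(z)·(D²_H g)(ζ)) ≥ 0` for all `z ∈ B_{ε₀}(z₀) ∩ Ω`
and all `ζ ≠ 0`. -/
def SubsolProp (n : ℕ) (lam Lam δ : ℝ) (ω : ℝ → ℝ) (ε₀ : ℝ) : Prop :=
  ∀ (Ω : Set (Hpt n)), IsOpen Ω →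
    ∀ A : Hpt n → Matrix (Fin (2 * n)) (Fin (2 * n)) ℝ,
      MClass lam Lam Ω A → CClass ω Ω A → SymplecticOn Ω A →
        ∀ z₀ ∈ Ω, ∀ z ∈ kball z₀ ε₀ ∩ Ω, ∀ ζ : Hpt n, ζ ≠ 0 →
          0 ≤ -(A z * D2H (gfun (A z₀) ((2 * (n : ℝ) + 2 - 2) / 4 + δ)) ζ).trace

/-- Aux: transpose of J -/
lemma Jmat_transpose (n : ℕ) : (Jmat n)ᵀ = -Jmat n := by
  ext i j
  have hi : (i : ℕ) < 2 * n := i.isLt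
  simp only [Matrix.transpose_apply, Jmat, Matrix.of_apply, Matrix.neg_apply]
  split_ifs <;> first | omega | norm_num

lemma Jmat_mulVec_dot {n : ℕ} (x : Fin (2 * n) → ℝ) : (Jmat n).mulVec x ⬝ᵥ x = 0 := by
  have h : (Jmat n).mulVec x ⬝ᵥ x = -((Jmat n).mulVec x ⬝ᵥ x) := by
    conv_lhs => rw [dotProduct_comm, Matrix.dotProduct_mulVec,
      ← Matrix.mulVec_transpose, Jmat_transpose, Matrix.neg_mulVec, neg_dotProduct]
  linarith

lemma hmul_cancel {n : ℕ} (z ζ : Hpt n) : hmul z (hmul (hinv z) ζ) = ζ := by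
  have hJ := Jmat_mulVec_dot (n := n) z.1
  refine Prod.ext ?_ ?_
  · show z.1 + (-z.1 + ζ.1) = ζ.1
    abel
  · show z.2 + (-z.2 + ζ.2 + 2 * ((Jmat n).mulVec (-z.1) ⬝ᵥ ζ.1)) +
      2 * ((Jmat n).mulVec z.1 ⬝ᵥ (-z.1 + ζ.1)) = ζ.2
    rw [Matrix.mulVec_neg, neg_dotProduct, dotProduct_add,
      dotProduct_neg, hJ]
    ring

lemma measurePreserving_hmul (n : ℕ) (w : Hpt n) :
    MeasurePreserving (fun ζ : Hpt n => hmul w ζ) volume volume := by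
  have hgm : Measurable (Function.uncurry fun (ξ : Fin (2 * n) → ℝ) (τ : ℝ) =>
      w.2 + τ + 2 * ((Jmat n).mulVec w.1 ⬝ᵥ ξ)) := by
    apply Measurable.add
    · exact measurable_const.add measurable_snd
    · apply Measurable.const_mul
      unfold dotProduct
      exact Finset.measurable_sum _ fun i _ =>
        measurable_const.mul ((measurable_pi_apply i).comp measurable_fst)
  have key := (measurePreserving_add_left (volume : Measure (Fin (2 * n) → ℝ)) w.1).skew_product
    (μc := (volume : Measure ℝ)) (μd := (volume : Measure ℝ)) hgm ?_
  · rw [show (volume : Measure (Hpt n)) = (volume : Measure (Fin (2 * n) → ℝ)).prod volume from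
      Measure.volume_eq_prod _ _]
    exact key
  · refine Filter.Eventually.of_forall fun ξ => ?_
    have : (fun τ : ℝ => w.2 + τ + 2 * ((Jmat n).mulVec w.1 ⬝ᵥ ξ)) =
        fun τ : ℝ => τ + (w.2 + 2 * ((Jmat n).mulVec w.1 ⬝ᵥ ξ)) := by
      funext τ; ring
    rw [this]
    exact (measurePreserving_add_right (volume : Measure ℝ) _).map_eq

lemma continuous_hmul {n : ℕ} (w : Hpt n) : Continuous (fun ζ : Hpt n => hmul w ζ) := by
  unfold hmul
  refine Continuous.prodMk (continuous_const.add continuous_fst) ?_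
  refine (continuous_const.add continuous_snd).add (continuous_const.mul ?_)
  unfold dotProduct
  exact continuous_finset_sum _ fun i _ =>
    continuous_const.mul ((continuous_apply i).comp continuous_fst)


/-- `ψ(x,t) = |x|⁴ + t²`. -/
def psiH {n : ℕ} (w : Hpt n) : ℝ := (∑ i, w.1 i ^ 2) ^ 2 + w.2 ^ 2

lemma psiH_nonneg {n : ℕ} (w : Hpt n) : 0 ≤ psiH w := by unfold psiH; positivity

lemma continuous_psiH {n : ℕ} : Continuous (psiH (n := n)) := by
  unfold psiH
  exact ((continuous_finset_sum _ fun i _ =>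
    ((continuous_apply i).comp continuous_fst).pow 2).pow 2).add (continuous_snd.pow 2)

lemma psiH_ball_vol (n : ℕ) {u : ℝ} (hu : 0 < u) :
    volume {w : Hpt n | psiH w < u} ≤
      ENNReal.ofReal (2 ^ (2 * n + 1) * u ^ ((2 * (n : ℝ) + 2) / 4)) := by
  set a := u ^ ((4 : ℝ)⁻¹) with ha_def
  set b := u ^ ((2 : ℝ)⁻¹) with hb_def
  have ha : 0 < a := Real.rpow_pos_of_pos hu _
  have hb : 0 < b := Real.rpow_pos_of_pos hu _
  have hbsq : b ^ 2 = u := by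
    rw [hb_def, ← Real.rpow_natCast (u ^ ((2:ℝ)⁻¹)) 2, ← Real.rpow_mul hu.le]; norm_num
  have habsq : a ^ 2 = b := by
    rw [ha_def, hb_def, ← Real.rpow_natCast (u ^ ((4:ℝ)⁻¹)) 2, ← Real.rpow_mul hu.le]; norm_num
  have hsub : {w : Hpt n | psiH w < u} ⊆
      (Set.pi Set.univ fun _ : Fin (2 * n) => Set.Icc (-a) a) ×ˢ Set.Icc (-b) b := by
    rintro ⟨x, t⟩ hw
    simp only [Set.mem_setOf_eq, psiH] at hw
    have hsum_nn : (0:ℝ) ≤ ∑ i, x i ^ 2 := Finset.sum_nonneg fun i _ => sq_nonneg _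
    have hx2 : (∑ i, x i ^ 2) ≤ b := by nlinarith [sq_nonneg t]
    constructor
    · intro i _
      have hxi : x i ^ 2 ≤ b :=
        le_trans (Finset.single_le_sum (fun j _ => sq_nonneg (x j)) (Finset.mem_univ i)) hx2
      constructor <;> nlinarith
    · have ht2 : (t:ℝ) ^ 2 ≤ u := by nlinarith
      constructor <;> nlinarith
  calc volume {w : Hpt n | psiH w < u}
      ≤ volume ((Set.pi Set.univ fun _ : Fin (2 * n) => Set.Icc (-a) a) ×ˢ Set.Icc (-b) b) :=
        measure_mono hsub
    _ = (∏ _i : Fin (2 * n), volume (Set.Icc (-a) a)) * volume (Set.Icc (-b) b) := by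
        rw [show (volume : Measure (Hpt n)) = (volume : Measure (Fin (2*n) → ℝ)).prod volume from
          Measure.volume_eq_prod _ _, Measure.prod_prod, volume_pi_pi]
    _ = ENNReal.ofReal (2 * a) ^ (2 * n) * ENNReal.ofReal (2 * b) := by
        rw [Real.volume_Icc, Real.volume_Icc, Finset.prod_const, Finset.card_univ, Fintype.card_fin]
        simp only [sub_neg_eq_add, two_mul]
    _ ≤ ENNReal.ofReal (2 ^ (2 * n + 1) * u ^ ((2 * (n : ℝ) + 2) / 4)) := by
        rw [← ENNReal.ofReal_pow (by positivity), ← ENNReal.ofReal_mul (by positivity)]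
        apply ENNReal.ofReal_le_ofReal
        have key : (2 * a) ^ (2 * n) * (2 * b) = 2 ^ (2 * n + 1) * u ^ ((2 * (n : ℝ) + 2) / 4) := by
          rw [mul_pow, ha_def, hb_def, ← Real.rpow_natCast (u ^ ((4:ℝ)⁻¹)) (2*n),
            ← Real.rpow_mul hu.le, pow_succ]
          have h2 : u ^ ((4:ℝ)⁻¹ * ((2*n : ℕ):ℝ)) * u ^ ((2:ℝ)⁻¹) = u ^ ((2*(n:ℝ)+2)/4) := by
            rw [← Real.rpow_add hu]; congr 1; push_cast; ring
          linear_combination (2 ^ (2*n) * 2 : ℝ) * h2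
        rw [key]

lemma master_bound (n : ℕ) (α : ℝ) (hα : 0 < α) (h4 : 4 * α < 2 * (n : ℝ) + 2) :
    ∃ C : ℝ, 0 < C ∧ ∀ S : Set (Hpt n), MeasurableSet S → volume S ≠ ⊤ →
      ∫⁻ w in S, ENNReal.ofReal (psiH w ^ (-α)) ∂volume ≤
        ENNReal.ofReal (C * (volume S).toReal ^ (1 - 4 * α / (2 * (n : ℝ) + 2))) := by
  classical
  set q : ℝ := (2 * (n : ℝ) + 2) / 4 with hqdef
  have h2n : (0:ℝ) < 2 * (n : ℝ) + 2 := by positivity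
  have hq0 : 0 < q := by positivity
  have hαq : α < q := by rw [hqdef]; linarith
  set w₀ : ℝ := (2⁻¹ : ℝ) ^ (q - α) with hw0def
  have hw00 : 0 < w₀ := Real.rpow_pos_of_pos (by norm_num) _
  have hw01 : w₀ < 1 := Real.rpow_lt_one (by norm_num) (by norm_num) (by linarith)
  set K : ℝ := 2 ^ (2 * n + 1) * 2 ^ α * (1 - w₀)⁻¹ with hKdef
  have h1w : (0:ℝ) < 1 - w₀ := by linarith
  have hK0 : 0 < K := by
    apply mul_pos (mul_pos (by positivity) (Real.rpow_pos_of_pos (by norm_num) _))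
    exact inv_pos.mpr h1w
  refine ⟨1 + K, by linarith, ?_⟩
  intro S hSm hSfin
  by_cases hS0 : volume S = 0
  · rw [Measure.restrict_eq_zero.mpr hS0, lintegral_zero_measure]; exact zero_le
  set v : ℝ := (volume S).toReal with hvdef
  have hv : 0 < v := ENNReal.toReal_pos hS0 hSfin
  set p : ℝ := 1 - 4 * α / (2 * (n : ℝ) + 2) with hpdef
  have hpq : p = (q - α) / q := by
    rw [hpdef, hqdef]; field_simp
  set s : ℝ := v ^ q⁻¹ with hsdef
  have hs : 0 < s := Real.rpow_pos_of_pos hv _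
  have hsp : s ^ (q - α) = v ^ p := by
    rw [hsdef, ← Real.rpow_mul hv.le, hpq]
    congr 1
    rw [inv_mul_eq_div]
  set f : Hpt n → ENNReal := fun w => ENNReal.ofReal (psiH w ^ (-α)) with hfdef
  set E1 : Set (Hpt n) := {w | s ≤ psiH w} ∩ S with hE1def
  set A : ℕ → Set (Hpt n) :=
    fun k => {w | s * (2⁻¹ : ℝ) ^ (k + 1) ≤ psiH w ∧ psiH w < s * (2⁻¹ : ℝ) ^ k} with hAdef
  set E3 : Set (Hpt n) := {w | psiH w = 0} with hE3def
  have hcover : S ⊆ E1 ∪ (⋃ k, A k) ∪ E3 := by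
    intro w hw
    rcases le_or_gt s (psiH w) with h | h
    · exact Or.inl (Or.inl ⟨h, hw⟩)
    rcases eq_or_lt_of_le (psiH_nonneg w) with h0 | h0
    · exact Or.inr h0.symm
    · refine Or.inl (Or.inr ?_)
      have hex : ∃ m : ℕ, s * (2⁻¹ : ℝ) ^ (m + 1) ≤ psiH w := by
        obtain ⟨m, hm⟩ := exists_pow_lt_of_lt_one (div_pos h0 hs) (by norm_num : (2⁻¹:ℝ) < 1)
        refine ⟨m, ?_⟩
        have h1 : ((2:ℝ)⁻¹) ^ (m + 1) ≤ (2⁻¹:ℝ) ^ m :=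
          pow_le_pow_of_le_one (by norm_num) (by norm_num) (by omega)
        have := le_of_lt (lt_of_le_of_lt h1 hm)
        calc s * (2⁻¹:ℝ) ^ (m+1) ≤ s * (psiH w / s) := by
              apply mul_le_mul_of_nonneg_left this hs.le
          _ = psiH w := by field_simp
      refine Set.mem_iUnion.mpr ⟨Nat.find hex, Nat.find_spec hex, ?_⟩
      by_cases hf0 : Nat.find hex = 0
      · rw [hf0]; simpa using h
      · have hmin := Nat.find_min hex (m := Nat.find hex - 1) (by omega)
        have heq : Nat.find hex - 1 + 1 = Nat.find hex := by omega
        rw [heq] at hmin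
        exact lt_of_not_ge hmin
  have hE1m : MeasurableSet E1 :=
    ((isClosed_le continuous_const continuous_psiH).measurableSet).inter hSm
  have hvolS : volume S = ENNReal.ofReal v := (ENNReal.ofReal_toReal hSfin).symm
  have hE1 : ∫⁻ w in E1, f w ≤ ENNReal.ofReal (v ^ p) := by
    have hval : s ^ (-α) * v = v ^ p := by
      rw [hsdef, ← Real.rpow_mul hv.le]
      nth_rewrite 2 [← Real.rpow_one v]
      rw [← Real.rpow_add hv, hpq]
      congr 1
      field_simp
      ring
    calc ∫⁻ w in E1, f w
        ≤ ∫⁻ _ in E1, ENNReal.ofReal (s ^ (-α)) ∂volume := by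
          refine setLIntegral_mono' hE1m fun w hw => ?_
          exact ENNReal.ofReal_le_ofReal
            (Real.rpow_le_rpow_of_nonpos hs hw.1 (by linarith))
      _ = ENNReal.ofReal (s ^ (-α)) * volume E1 := setLIntegral_const _ _
      _ ≤ ENNReal.ofReal (s ^ (-α)) * volume S :=
          mul_le_mul_right (measure_mono Set.inter_subset_right) _
      _ = ENNReal.ofReal (v ^ p) := by
          rw [hvolS, ← ENNReal.ofReal_mul (Real.rpow_nonneg hs.le _), hval]
  have hE3 : ∫⁻ w in E3, f w ≤ 0 := by
    have hE3m : MeasurableSet E3 :=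
      (isClosed_eq continuous_psiH continuous_const).measurableSet
    calc ∫⁻ w in E3, f w ≤ ∫⁻ _ in E3, 0 ∂volume := by
          refine setLIntegral_mono' hE3m fun w hw => ?_
          have : psiH w = 0 := hw
          rw [hfdef]
          simp only
          rw [this, Real.zero_rpow (by intro hc; exact absurd (neg_eq_zero.mp hc) (ne_of_gt hα))]
          simp
      _ = 0 := lintegral_zero
  have hAk : ∀ k : ℕ, ∫⁻ w in A k, f w ≤
      ENNReal.ofReal ((2 ^ (2 * n + 1) * 2 ^ α * s ^ (q - α)) * w₀ ^ k) := by
    intro k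
    have hu : (0:ℝ) < s * (2⁻¹ : ℝ) ^ k := by positivity
    have hu1 : (0:ℝ) < s * (2⁻¹ : ℝ) ^ (k + 1) := by positivity
    have hAm : MeasurableSet (A k) := by
      have : A k = {w : Hpt n | s * (2⁻¹ : ℝ) ^ (k+1) ≤ psiH w} ∩
          {w : Hpt n | psiH w < s * (2⁻¹ : ℝ) ^ k} := rfl
      rw [this]
      exact ((isClosed_le continuous_const continuous_psiH).measurableSet).inter
        ((isOpen_lt continuous_psiH continuous_const).measurableSet)
    have hreal : (s * (2⁻¹:ℝ) ^ (k+1)) ^ (-α) * (2 ^ (2*n+1) * (s * (2⁻¹:ℝ) ^ k) ^ ((2*(n:ℝ)+2)/4))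
        = (2 ^ (2 * n + 1) * 2 ^ α * s ^ (q - α)) * w₀ ^ k := by
      have hc : (0:ℝ) < (2⁻¹:ℝ) := by norm_num
      rw [show ((2*(n:ℝ)+2)/4) = q from rfl]
      rw [Real.mul_rpow hs.le (by positivity), Real.mul_rpow hs.le (by positivity),
        ← Real.rpow_natCast (2⁻¹:ℝ) (k+1), ← Real.rpow_natCast (2⁻¹:ℝ) k,
        ← Real.rpow_mul hc.le, ← Real.rpow_mul hc.le,
        hw0def, ← Real.rpow_natCast ((2⁻¹:ℝ) ^ (q - α)) k, ← Real.rpow_mul hc.le]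
      have hsplit : s ^ (-α) * (2⁻¹:ℝ) ^ (((k:ℝ)+1) * (-α)) * (2 ^ (2*n+1) * (s ^ q * (2⁻¹:ℝ) ^ ((k:ℝ) * q)))
          = 2 ^ (2*n+1) * ((s ^ (-α) * s ^ q) * ((2⁻¹:ℝ) ^ (((k:ℝ)+1) * (-α)) * (2⁻¹:ℝ) ^ ((k:ℝ) * q))) := by
        ring
      push_cast
      rw [hsplit, ← Real.rpow_add hs, ← Real.rpow_add hc]
      have e1 : -α + q = q - α := by ring
      have e2 : ((k:ℝ)+1) * (-α) + (k:ℝ) * q = -α + (q - α) * (k:ℝ) := by ring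
      rw [e1, e2, Real.rpow_add hc, Real.rpow_neg hc.le α,
        Real.inv_rpow (by norm_num : (0:ℝ) ≤ 2), inv_inv]
      ring
    calc ∫⁻ w in A k, f w
        ≤ ∫⁻ _ in A k, ENNReal.ofReal ((s * (2⁻¹:ℝ) ^ (k+1)) ^ (-α)) ∂volume := by
          refine setLIntegral_mono' hAm fun w hw => ?_
          exact ENNReal.ofReal_le_ofReal
            (Real.rpow_le_rpow_of_nonpos hu1 hw.1 (by linarith))
      _ = ENNReal.ofReal ((s * (2⁻¹:ℝ) ^ (k+1)) ^ (-α)) * volume (A k) := setLIntegral_const _ _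
      _ ≤ ENNReal.ofReal ((s * (2⁻¹:ℝ) ^ (k+1)) ^ (-α)) *
            ENNReal.ofReal (2 ^ (2*n+1) * (s * (2⁻¹:ℝ) ^ k) ^ ((2*(n:ℝ)+2)/4)) := by
          apply mul_le_mul_right
          exact le_trans (measure_mono fun w hw => hw.2) (psiH_ball_vol n hu)
      _ = ENNReal.ofReal ((2 ^ (2 * n + 1) * 2 ^ α * s ^ (q - α)) * w₀ ^ k) := by
          rw [← ENNReal.ofReal_mul (Real.rpow_nonneg hu1.le _), hreal]
  have hE2 : ∫⁻ w in ⋃ k, A k, f w ≤ ENNReal.ofReal (K * v ^ p) := by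
    calc ∫⁻ w in ⋃ k, A k, f w ≤ ∑' k, ∫⁻ w in A k, f w := lintegral_iUnion_le _ _
      _ ≤ ∑' k, ENNReal.ofReal ((2 ^ (2 * n + 1) * 2 ^ α * s ^ (q - α)) * w₀ ^ k) :=
          ENNReal.tsum_le_tsum hAk
      _ = ENNReal.ofReal (2 ^ (2 * n + 1) * 2 ^ α * s ^ (q - α)) * ∑' k, ENNReal.ofReal w₀ ^ k := by
          rw [← ENNReal.tsum_mul_left]
          exact tsum_congr fun k => by
            rw [ENNReal.ofReal_mul (by positivity), ENNReal.ofReal_pow hw00.le]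
      _ = ENNReal.ofReal (2 ^ (2 * n + 1) * 2 ^ α * s ^ (q - α)) * (1 - ENNReal.ofReal w₀)⁻¹ := by
          rw [ENNReal.tsum_geometric]
      _ = ENNReal.ofReal (K * v ^ p) := by
          rw [← ENNReal.ofReal_one, ← ENNReal.ofReal_sub _ hw00.le,
            ← ENNReal.ofReal_inv_of_pos h1w,
            ← ENNReal.ofReal_mul (by positivity), hsp, hKdef]
          congr 1
          ring
  calc ∫⁻ w in S, f w ≤ ∫⁻ w in E1 ∪ (⋃ k, A k) ∪ E3, f w := lintegral_mono_set hcover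
    _ ≤ (∫⁻ w in E1 ∪ (⋃ k, A k), f w) + ∫⁻ w in E3, f w := lintegral_union_le _ _ _
    _ ≤ ((∫⁻ w in E1, f w) + ∫⁻ w in ⋃ k, A k, f w) + ∫⁻ w in E3, f w :=
        add_le_add_left (lintegral_union_le _ _ _) _
    _ ≤ (ENNReal.ofReal (v ^ p) + ENNReal.ofReal (K * v ^ p)) + 0 :=
        add_le_add (add_le_add hE1 hE2) hE3
    _ = ENNReal.ofReal ((1 + K) * v ^ p) := by
        rw [add_zero, ← ENNReal.ofReal_add (by positivity) (by positivity)]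
        congr 1
        ring

open scoped MatrixOrder in
lemma inv_quad_lower {n : ℕ} {Lam : ℝ} (hLam : 1 ≤ Lam)
    {M : Matrix (Fin (2 * n)) (Fin (2 * n)) ℝ} (hM : M.PosDef)
    (hle : matLE M (Lam • (1 : Matrix (Fin (2 * n)) (Fin (2 * n)) ℝ)))
    (x : Fin (2 * n) → ℝ) : (∑ i, x i ^ 2) ≤ Lam * (M⁻¹.mulVec x ⬝ᵥ x) := by
  classical
  have hL0 : (0:ℝ) < Lam := lt_of_lt_of_le one_pos hLam
  set y := M⁻¹.mulVec x with hydef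
  have hMy : M.mulVec y = x := by
    rw [hydef, Matrix.mulVec_mulVec, Matrix.mul_nonsing_inv _ (hM.det_pos.ne'.isUnit),
      Matrix.one_mulVec]
  have hpsd := hM.posSemidef
  set Sq := CFC.sqrt M with hSqdef
  have hSqsym : Sqᵀ = Sq := by
    have h : Sq.IsHermitian := (Matrix.nonneg_iff_posSemidef.mp (CFC.sqrt_nonneg M)).1
    simpa [Matrix.IsHermitian, Matrix.conjTranspose_eq_transpose_of_trivial] using h
  have hSS : Sq * Sq = M := CFC.sqrt_mul_sqrt_self M (Matrix.nonneg_iff_posSemidef.mpr hpsd)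
  have key : ∀ u w : Fin (2 * n) → ℝ, u ⬝ᵥ M.mulVec w = Sq.mulVec u ⬝ᵥ Sq.mulVec w := by
    intro u w
    rw [← hSS, ← Matrix.mulVec_mulVec, Matrix.dotProduct_mulVec, ← Matrix.mulVec_transpose,
      hSqsym]
  have hxx : x ⬝ᵥ x = Sq.mulVec x ⬝ᵥ Sq.mulVec y := by
    rw [← key x y, hMy]
  have hCS : (Sq.mulVec x ⬝ᵥ Sq.mulVec y) ^ 2 ≤
      (Sq.mulVec x ⬝ᵥ Sq.mulVec x) * (Sq.mulVec y ⬝ᵥ Sq.mulVec y) := by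
    have h := Finset.sum_mul_sq_le_sq_mul_sq Finset.univ (Sq.mulVec x) (Sq.mulVec y)
    simpa [dotProduct, sq] using h
  have haa : Sq.mulVec x ⬝ᵥ Sq.mulVec x = x ⬝ᵥ M.mulVec x := (key x x).symm
  have hbb : Sq.mulVec y ⬝ᵥ Sq.mulVec y = y ⬝ᵥ x := by
    rw [← key y y, hMy]
  have hMx : x ⬝ᵥ M.mulVec x ≤ Lam * (x ⬝ᵥ x) := by
    have h := hle.dotProduct_mulVec_nonneg x
    have hsx : star x = x := rfl
    rw [hsx, Matrix.sub_mulVec, dotProduct_sub, Matrix.smul_mulVec,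
      Matrix.one_mulVec, dotProduct_smul] at h
    have : Lam • (x ⬝ᵥ x) = Lam * (x ⬝ᵥ x) := rfl
    linarith [h]
  have hq0 : 0 ≤ y ⬝ᵥ x := by
    rw [← hbb]
    exact Finset.sum_nonneg fun i _ => mul_self_nonneg _
  have hsum : ∑ i, x i ^ 2 = x ⬝ᵥ x := by
    simp [dotProduct, sq]
  have hxx0 : 0 ≤ x ⬝ᵥ x := by
    rw [← hsum]; positivity
  rcases eq_or_lt_of_le hxx0 with h0 | h0
  · rw [hsum, ← h0]
    have : M⁻¹.mulVec x ⬝ᵥ x = y ⬝ᵥ x := rfl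
    rw [this]
    positivity
  · have hchain : (x ⬝ᵥ x) ^ 2 ≤ Lam * (x ⬝ᵥ x) * (y ⬝ᵥ x) := by
      calc (x ⬝ᵥ x) ^ 2 = (Sq.mulVec x ⬝ᵥ Sq.mulVec y) ^ 2 := by rw [hxx]
        _ ≤ (Sq.mulVec x ⬝ᵥ Sq.mulVec x) * (Sq.mulVec y ⬝ᵥ Sq.mulVec y) := hCS
        _ = (x ⬝ᵥ M.mulVec x) * (y ⬝ᵥ x) := by rw [haa, hbb]
        _ ≤ Lam * (x ⬝ᵥ x) * (y ⬝ᵥ x) := mul_le_mul_of_nonneg_right hMx hq0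
    have hfin : x ⬝ᵥ x ≤ Lam * (y ⬝ᵥ x) := by nlinarith
    rw [hsum]
    exact hfin

lemma phi_rpow_le {n : ℕ} {Lam : ℝ} (hLam : 1 ≤ Lam)
    {M : Matrix (Fin (2 * n)) (Fin (2 * n)) ℝ} (hM : M.PosDef)
    (hle : matLE M (Lam • (1 : Matrix (Fin (2 * n)) (Fin (2 * n)) ℝ)))
    {α : ℝ} (hα : 0 < α) (w : Hpt n) :
    phiM M w ^ (-α) ≤ Lam ^ (2 * α) * psiH w ^ (-α) := by
  have hL0 : (0:ℝ) < Lam := lt_of_lt_of_le one_pos hLam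
  have hq := inv_quad_lower hLam hM hle w.1
  have hsum_nn : (0:ℝ) ≤ ∑ i, w.1 i ^ 2 := Finset.sum_nonneg fun i _ => sq_nonneg _
  by_cases h0 : psiH w = 0
  · have hs0 : (∑ i, w.1 i ^ 2) = 0 ∧ w.2 = 0 := by
      unfold psiH at h0
      constructor <;> nlinarith [sq_nonneg (∑ i, w.1 i ^ 2), sq_nonneg w.2]
    have hx0 : w.1 = 0 := by
      funext i
      have := (Finset.sum_eq_zero_iff_of_nonneg (fun j _ => sq_nonneg (w.1 j))).mp hs0.1
        i (Finset.mem_univ i)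
      exact pow_eq_zero_iff (n := 2) (by norm_num) |>.mp this
    have hphi0 : phiM M w = 0 := by
      unfold phiM
      rw [hx0, hs0.2]
      simp
    rw [h0, hphi0, Real.zero_rpow (by simpa using hα.ne'), mul_zero]
  · have hψ : 0 < psiH w := lt_of_le_of_ne (psiH_nonneg w) (Ne.symm h0)
    have hQnn : 0 ≤ M⁻¹.mulVec w.1 ⬝ᵥ w.1 := by nlinarith
    have hkey : psiH w / Lam ^ 2 ≤ phiM M w := by
      unfold psiH phiM
      rw [div_le_iff₀ (by positivity)]
      have hA : (∑ i, w.1 i ^ 2) ^ 2 ≤ Lam ^ 2 * (M⁻¹.mulVec w.1 ⬝ᵥ w.1) ^ 2 := by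
        nlinarith [mul_nonneg (mul_nonneg hL0.le hQnn) (add_nonneg hsum_nn (mul_nonneg hL0.le hQnn))]
      have hL1 : (1:ℝ) ≤ Lam ^ 2 := by nlinarith
      have hB : w.2 ^ 2 ≤ Lam ^ 2 * w.2 ^ 2 := le_mul_of_one_le_left (sq_nonneg w.2) hL1
      nlinarith [hA, hB]
    have hdpos : 0 < psiH w / Lam ^ 2 := by positivity
    have h1 : phiM M w ^ (-α) ≤ (psiH w / Lam ^ 2) ^ (-α) :=
      Real.rpow_le_rpow_of_nonpos hdpos hkey (by linarith)
    refine le_trans h1 (le_of_eq ?_)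
    rw [Real.div_rpow (psiH_nonneg w) (by positivity), Real.rpow_neg (by positivity : (0:ℝ) ≤ Lam ^ 2)]
    rw [div_eq_mul_inv, inv_inv, ← Real.rpow_natCast Lam 2, ← Real.rpow_mul hL0.le]
    push_cast
    ring


/-- Remark 3.8, estimate (3.9). With `Q = 2n+2` and `α = (Q-2)/4 + δ`,
there is `γ > 0` depending only on `Q, Λ, δ` such that for every symmetric positive
definite `M` with `M⁻¹ ≤ (1/λ)I` and `M ≤ ΛI` (`0 < λ ≤ 1 ≤ Λ`), every bounded open set
`O` and every `z`, the barrier `h(z) = ∫_O g(z⁻¹∘ζ) dζ`, `g = -(1/α)φ_M^{-α}`, satisfies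
`0 ≥ h(z) ≥ -γ·|O|^{1-4α/Q}`. -/
theorem stmt12 (n : ℕ) (hn : 1 ≤ n) (Lam δ : ℝ) (hLam : 1 ≤ Lam)
    (hδ : 0 < δ) (hδ' : δ < 1 / 2)
    (Q α : ℝ) (hQ : Q = 2 * n + 2) (hα : α = (Q - 2) / 4 + δ) :
    ∃ γ > 0, ∀ lam : ℝ, 0 < lam → lam ≤ 1 →
      ∀ M : Matrix (Fin (2 * n)) (Fin (2 * n)) ℝ, M.IsSymm → M.PosDef →
        matLE M⁻¹ (lam⁻¹ • (1 : Matrix (Fin (2 * n)) (Fin (2 * n)) ℝ)) →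
        matLE M (Lam • (1 : Matrix (Fin (2 * n)) (Fin (2 * n)) ℝ)) →
      ∀ O : Set (Hpt n), IsOpen O → Bornology.IsBounded O →
      ∀ z : Hpt n,
        (∫ ζ in O, gfun M α (hmul (hinv z) ζ) ∂volume) ≤ 0 ∧
        -(γ * (volume O).toReal ^ (1 - 4 * α / Q)) ≤
          ∫ ζ in O, gfun M α (hmul (hinv z) ζ) ∂volume := by
  subst hQ
  subst hα
  have hα0 : (0:ℝ) < (2 * (n:ℝ) + 2 - 2) / 4 + δ := by
    have := Nat.cast_nonneg (α := ℝ) n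
    linarith
  have h4 : 4 * ((2 * (n:ℝ) + 2 - 2) / 4 + δ) < 2 * (n:ℝ) + 2 := by linarith
  obtain ⟨C, hC0, hmaster⟩ := master_bound n _ hα0 h4
  set α : ℝ := (2 * (n:ℝ) + 2 - 2) / 4 + δ with hαdef
  have hL0 : (0:ℝ) < Lam := lt_of_lt_of_le one_pos hLam
  have hinvα : (0:ℝ) < 1 / α := one_div_pos.mpr hα0
  refine ⟨1 / α * Lam ^ (2 * α) * C,
    mul_pos (mul_pos hinvα (Real.rpow_pos_of_pos hL0 _)) hC0, ?_⟩
  intro lam hlam0 hlam1 M hMsym hMpd hMinv hMle O hOopen hObd z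
  constructor
  · apply integral_nonpos
    intro ζ
    unfold gfun
    apply mul_nonpos_of_nonpos_of_nonneg
    · simp only [neg_nonpos]
      exact hinvα.le
    · apply Real.rpow_nonneg
      unfold phiM
      positivity
  · have hOfin : volume O ≠ ⊤ := hObd.measure_lt_top.ne
    set S : Set (Hpt n) := (fun ζ : Hpt n => hmul z ζ) ⁻¹' O with hSdef
    have hSm : MeasurableSet S := (continuous_hmul z).measurable hOopen.measurableSet
    have hSvol : volume S = volume O :=
      (measurePreserving_hmul n z).measure_preimage hOopen.measurableSet.nullMeasurableSet
    have hTpre : (fun ζ : Hpt n => hmul (hinv z) ζ) ⁻¹' S = O := by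
      ext ζ
      simp only [hSdef, Set.mem_preimage, hmul_cancel]
    have hf_meas : Measurable fun w : Hpt n => ENNReal.ofReal (psiH w ^ (-α)) :=
      (continuous_psiH.measurable.pow_const _).ennreal_ofReal
    set c₁ : ℝ := 1 / α * Lam ^ (2 * α) with hc1
    have hc₁0 : (0:ℝ) ≤ c₁ := le_of_lt (mul_pos hinvα (Real.rpow_pos_of_pos hL0 _))
    have hpoint : ∀ w : Hpt n, ENNReal.ofReal ‖gfun M α w‖ ≤
        ENNReal.ofReal c₁ * ENNReal.ofReal (psiH w ^ (-α)) := by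
      intro w
      rw [← ENNReal.ofReal_mul hc₁0]
      apply ENNReal.ofReal_le_ofReal
      have hphinn : (0:ℝ) ≤ phiM M w := by unfold phiM; positivity
      have hne : ‖gfun M α w‖ = 1 / α * phiM M w ^ (-α) := by
        unfold gfun
        rw [Real.norm_eq_abs, abs_mul, abs_neg, abs_of_nonneg hinvα.le,
          abs_of_nonneg (Real.rpow_nonneg hphinn _)]
      rw [hne, hc1, mul_assoc]
      exact mul_le_mul_of_nonneg_left (phi_rpow_le hLam hMpd hMle hα0 w) hinvα.le
    have hlint : (∫⁻ ζ in O, ENNReal.ofReal ‖gfun M α (hmul (hinv z) ζ)‖ ∂volume)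
        ≤ ENNReal.ofReal (c₁ * (C * (volume O).toReal ^ (1 - 4 * α / (2 * (n:ℝ) + 2)))) := by
      calc ∫⁻ ζ in O, ENNReal.ofReal ‖gfun M α (hmul (hinv z) ζ)‖ ∂volume
          ≤ ∫⁻ ζ in O, ENNReal.ofReal c₁ *
              ENNReal.ofReal (psiH (hmul (hinv z) ζ) ^ (-α)) ∂volume :=
            lintegral_mono fun ζ => hpoint _
        _ = ENNReal.ofReal c₁ *
              ∫⁻ ζ in O, ENNReal.ofReal (psiH (hmul (hinv z) ζ) ^ (-α)) ∂volume :=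
            lintegral_const_mul' _ _ ENNReal.ofReal_ne_top
        _ = ENNReal.ofReal c₁ * ∫⁻ w in S, ENNReal.ofReal (psiH w ^ (-α)) ∂volume := by
            rw [← hTpre,
              (measurePreserving_hmul n (hinv z)).setLIntegral_comp_preimage hSm hf_meas]
        _ ≤ ENNReal.ofReal c₁ *
              ENNReal.ofReal (C * (volume S).toReal ^ (1 - 4 * α / (2 * (n:ℝ) + 2))) :=
            mul_le_mul_right (hmaster S hSm (by rw [hSvol]; exact hOfin)) _
        _ = ENNReal.ofReal (c₁ * (C * (volume O).toReal ^ (1 - 4 * α / (2 * (n:ℝ) + 2)))) := by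
            rw [hSvol, ← ENNReal.ofReal_mul hc₁0]
    have hnorm := norm_integral_le_lintegral_norm (μ := volume.restrict O)
      (fun ζ => gfun M α (hmul (hinv z) ζ))
    have hvnn : (0:ℝ) ≤ (volume O).toReal ^ (1 - 4 * α / (2 * (n:ℝ) + 2)) :=
      Real.rpow_nonneg ENNReal.toReal_nonneg _
    have h2 : (∫⁻ ζ in O, ENNReal.ofReal ‖gfun M α (hmul (hinv z) ζ)‖ ∂volume).toReal
        ≤ 1 / α * Lam ^ (2 * α) * C * (volume O).toReal ^ (1 - 4 * α / (2 * (n:ℝ) + 2)) := by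
      apply ENNReal.toReal_le_of_le_ofReal
        (mul_nonneg (mul_nonneg hc₁0 hC0.le) hvnn)
      refine le_trans hlint (le_of_eq ?_)
      rw [hc1]
      congr 1
      ring
    have h3 := le_trans hnorm h2
    rw [Real.norm_eq_abs] at h3
    exact (abs_le.mp h3).1


end
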